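/- A point x ∈ ℝ^d lies on the sphere through d+1 affinely independent points p₀, …, p_d if and only if the (d+2)×(d+2) determinant whose rows are (‖y‖², y₁, …, y_d, 1) for y ∈ {x, p₀, …, p_d} vanishes. -/

import Mathlib

open Finset RealInnerProductSpace

noncomputable def sphRow (d : ℕ) (y : EuclideanSpace ℝ (Fin d)) : Fin (d + 2) → ℝ :=
  fun j => if h0 : (j : ℕ) = 0 then ‖y‖ ^ 2
    else if h1 : (j : ℕ) < d + 1 then y ⟨(j : ℕ) - 1, by omega⟩ else 1

lemma sphRow_zero (d : ℕ) (y : EuclideanSpace ℝ (Fin d)) : sphRow d y 0 = ‖y‖ ^ 2 := by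
  simp [sphRow]

lemma sphRow_succ (d : ℕ) (y : EuclideanSpace ℝ (Fin d)) (k : Fin d) :
    sphRow d y ⟨(k : ℕ) + 1, by omega⟩ = y k := by
  have h1 : (k : ℕ) + 1 < d + 1 := by omega
  simp only [sphRow]
  rw [dif_neg (by omega), dif_pos h1]
  exact congrArg (fun i => y i) (Fin.ext (Nat.add_sub_cancel _ _))

lemma sphRow_last (d : ℕ) (y : EuclideanSpace ℝ (Fin d)) :
    sphRow d y ⟨d + 1, by omega⟩ = 1 := by
  simp [sphRow]

lemma sum_coord {n m : ℕ} (w : Fin m → ℝ) (q : Fin m → EuclideanSpace ℝ (Fin n)) (j : Fin n) :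
    (∑ i, w i • q i) j = ∑ i, w i * q i j := by
  let L : EuclideanSpace ℝ (Fin n) →ₗ[ℝ] ℝ :=
    (LinearMap.proj j).comp (WithLp.linearEquiv 2 ℝ (Fin n → ℝ)).toLinearMap
  have h := map_sum L (fun i => w i • q i) Finset.univ
  have h2 : ∀ y : EuclideanSpace ℝ (Fin n), L y = y j := fun _ => rfl
  simp only [map_smul, smul_eq_mul, h2] at h
  exact h

lemma wsum {m : ℕ} (w a : Fin m → ℝ) (t : ℝ) :
    ∑ i, w i * (2 * a i + t) = 2 * (∑ i, w i * a i) + t * ∑ i, w i := by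
  rw [Finset.mul_sum, Finset.mul_sum, ← Finset.sum_add_distrib]
  exact Finset.sum_congr rfl fun i _ => by ring

lemma inner_wsum {n m : ℕ} (w : Fin m → ℝ) (q : Fin m → EuclideanSpace ℝ (Fin n))
    (c : EuclideanSpace ℝ (Fin n)) :
    ⟪∑ i, w i • q i, c⟫ = ∑ i, w i * ⟪q i, c⟫ := by
  rw [sum_inner]
  exact Finset.sum_congr rfl fun i _ => real_inner_smul_left _ _ _

lemma sphRow_li (d : ℕ) (p : Fin (d + 1) → EuclideanSpace ℝ (Fin d))
    (hp : AffineIndependent ℝ p) : LinearIndependent ℝ (fun i => sphRow d (p i)) := by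
  rw [Fintype.linearIndependent_iff]
  intro g hg
  have hcoord : ∀ j : Fin (d + 2), ∑ i, g i * sphRow d (p i) j = 0 := by
    intro j
    have := congrFun hg j
    simpa [Finset.sum_apply] using this
  have hsum : ∑ i, g i = 0 := by
    have := hcoord ⟨d + 1, by omega⟩
    simpa [sphRow_last] using this
  have hvec : ∑ i, g i • p i = 0 := by
    ext j
    have := hcoord ⟨(j : ℕ) + 1, by omega⟩
    simp only [sphRow_succ] at this
    rw [sum_coord]
    simpa using this
  intro i
  exact affineIndependent_iff.mp hp Finset.univ g hsum hvec i (Finset.mem_univ i)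

/-- A point `x ∈ ℝ^d` lies on the sphere through `d+1` affinely independent points
`p 0, …, p d` if and only if the `(d+2)×(d+2)` determinant whose rows are
`(‖y‖², y¹, …, y^d, 1)` for `y ∈ {x, p 0, …, p d}` vanishes. -/
theorem mem_sphere_iff_det_eq_zero
    (d : ℕ) (hd : 1 ≤ d) (p : Fin (d + 1) → EuclideanSpace ℝ (Fin d))
    (hp : AffineIndependent ℝ p)
    (x : EuclideanSpace ℝ (Fin d))
    (c : EuclideanSpace ℝ (Fin d)) (r : ℝ) (hr : 0 < r)
    (hsphere : ∀ i, dist (p i) c = r)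
    (M : Matrix (Fin (d + 2)) (Fin (d + 2)) ℝ)
    (hM : M = Matrix.of fun (i j : Fin (d + 2)) =>
      (fun y : EuclideanSpace ℝ (Fin d) =>
        if h0 : (j : ℕ) = 0 then ‖y‖ ^ 2
        else if h1 : (j : ℕ) < d + 1 then y ⟨(j : ℕ) - 1, by omega⟩
        else 1)
      ((Fin.cons x p : Fin (d + 2) → EuclideanSpace ℝ (Fin d)) i)) :
    dist x c = r ↔ M.det = 0 := by
  have hrows : (fun i => M i) = Fin.cons (sphRow d x) (fun i => sphRow d (p i)) := by
    subst hM
    funext i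
    refine Fin.cases ?_ ?_ i
    · rfl
    · intro k; rfl
  have hli := sphRow_li d p hp
  have key : ∀ y : EuclideanSpace ℝ (Fin d), dist y c = r →
      ‖y‖ ^ 2 = 2 * ⟪y, c⟫ + (r ^ 2 - ‖c‖ ^ 2) := by
    intro y hy
    have h1 : ‖y - c‖ ^ 2 = ‖y‖ ^ 2 - 2 * ⟪y, c⟫ + ‖c‖ ^ 2 := norm_sub_sq_real y c
    rw [dist_eq_norm] at hy
    rw [hy] at h1
    linarith
  have hdet : M.det = 0 ↔ sphRow d x ∈ Submodule.span ℝ (Set.range fun i => sphRow d (p i)) := by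
    constructor
    · intro h
      by_contra hmem
      have : LinearIndependent ℝ (fun i => M i) := by
        rw [hrows, linearIndependent_fin_cons]
        exact ⟨hli, hmem⟩
      have := Matrix.linearIndependent_rows_iff_isUnit.mp this
      rw [Matrix.isUnit_iff_isUnit_det, isUnit_iff_ne_zero] at this
      exact this h
    · intro hmem
      by_contra hdet0
      have hu : IsUnit M := by
        rw [Matrix.isUnit_iff_isUnit_det, isUnit_iff_ne_zero]; exact hdet0
      have := Matrix.linearIndependent_rows_iff_isUnit.mpr hu
      change LinearIndependent ℝ (fun i => M i) at this
      rw [hrows, linearIndependent_fin_cons] at this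
      exact this.2 hmem
  rw [hdet, Submodule.mem_span_range_iff_exists_fun]
  constructor
  · -- dist x c = r → exists weights
    intro hx
    have hspan : affineSpan ℝ (Set.range p) = ⊤ := by
      rw [hp.affineSpan_eq_top_iff_card_eq_finrank_add_one]
      simp [finrank_euclideanSpace_fin]
    have hxmem : x ∈ affineSpan ℝ (Set.range p) := hspan ▸ AffineSubspace.mem_top ℝ _ x
    obtain ⟨w, hw1, hwx⟩ := eq_affineCombination_of_mem_affineSpan_of_fintype hxmem
    rw [Finset.univ.affineCombination_eq_linear_combination p w hw1] at hwx
    refine ⟨w, ?_⟩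
    funext j
    rcases j with ⟨jv, hjlt⟩
    rw [Finset.sum_apply]
    by_cases h0 : jv = 0
    · subst h0
      show ∑ i, (w i • sphRow d (p i)) 0 = sphRow d x 0
      simp only [Pi.smul_apply, smul_eq_mul, sphRow_zero]
      have hinner : ⟪x, c⟫ = ∑ i, w i * ⟪p i, c⟫ := by rw [hwx]; exact inner_wsum w p c
      have h2 : ∑ i, w i * ‖p i‖ ^ 2
          = ∑ i, w i * (2 * ⟪p i, c⟫ + (r ^ 2 - ‖c‖ ^ 2)) := by
        refine Finset.sum_congr rfl fun i _ => ?_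
        rw [key (p i) (hsphere i)]
      rw [h2, wsum, hw1, ← hinner, key x hx]
      ring
    · by_cases h1 : jv < d + 1
      · have hk : jv - 1 < d := by omega
        set k : Fin d := ⟨jv - 1, hk⟩ with hkdef
        have hj : (⟨jv, hjlt⟩ : Fin (d + 2)) = ⟨(k : ℕ) + 1, by omega⟩ := by
          ext; simp [hkdef]; omega
        have e1 : ∀ (y : EuclideanSpace ℝ (Fin d)), sphRow d y ⟨jv, hjlt⟩ = y k := by
          intro y; rw [hj]; exact sphRow_succ d y k
        simp only [Pi.smul_apply, smul_eq_mul, e1]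
        rw [hwx, sum_coord]
      · have hj : (⟨jv, hjlt⟩ : Fin (d + 2)) = ⟨d + 1, by omega⟩ := by ext; simp; omega
        have e1 : ∀ (y : EuclideanSpace ℝ (Fin d)), sphRow d y ⟨jv, hjlt⟩ = 1 := by
          intro y; rw [hj]; exact sphRow_last d y
        simp only [Pi.smul_apply, smul_eq_mul, e1, mul_one]
        exact hw1
  · -- exists weights → dist x c = r
    rintro ⟨w, hw⟩
    have hcoord : ∀ j : Fin (d + 2), ∑ i, w i * sphRow d (p i) j = sphRow d x j := by
      intro j
      have := congrFun hw j
      simpa [Finset.sum_apply] using this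
    have hw1 : ∑ i, w i = 1 := by
      have := hcoord ⟨d + 1, by omega⟩
      simpa [sphRow_last] using this
    have hwx : x = ∑ i, w i • p i := by
      ext j
      have := hcoord ⟨(j : ℕ) + 1, by omega⟩
      simp only [sphRow_succ] at this
      rw [sum_coord]
      exact this.symm
    have hnorm : ∑ i, w i * ‖p i‖ ^ 2 = ‖x‖ ^ 2 := by
      have := hcoord 0
      simpa [sphRow_zero] using this
    have hinner : ⟪x, c⟫ = ∑ i, w i * ⟪p i, c⟫ := by rw [hwx]; exact inner_wsum w p c
    have hx2 : ‖x‖ ^ 2 = 2 * ⟪x, c⟫ + (r ^ 2 - ‖c‖ ^ 2) := by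
      have h2 : ∑ i, w i * ‖p i‖ ^ 2
          = ∑ i, w i * (2 * ⟪p i, c⟫ + (r ^ 2 - ‖c‖ ^ 2)) := by
        refine Finset.sum_congr rfl fun i _ => ?_
        rw [key (p i) (hsphere i)]
      rw [← hnorm, hinner, h2, wsum, hw1]
      ring
    have hdist2 : dist x c ^ 2 = r ^ 2 := by
      rw [dist_eq_norm]
      have := norm_sub_sq_real x c
      rw [hx2] at this
      linarith
    have hnn := dist_nonneg (x := x) (y := c)
    nlinarith [hdist2]
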